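/- Suppose F : 𝒞 → ℝⁿ is almost locally Lipschitz. Let φ ∈ 𝒞 with lip φ < ∞, let t₀ ∈ ℝ and α > 0. If y, z : [t₀−h, t₀+α] → ℝⁿ are both solutions of x'(t) = F(x_t) (t ≥ t₀), x_{t₀} = φ, then y(t) = z(t) for all t ∈ [t₀, t₀+α]. -/
import Mathlib


open scoped ENNReal

noncomputable section

/-- The state space 𝒞 = C([-h,0], ℝⁿ) with the sup-norm. -/
abbrev Hist (h : ℝ) (n : ℕ) : Type :=
  C(Set.Icc (-h) (0:ℝ), Fin n → ℝ)

/-- The segment x_t ∈ 𝒞 of a continuous function x : ℝ → ℝⁿ, x_t(θ) = x(t+θ). -/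
def seg {h : ℝ} {n : ℕ} (x : C(ℝ, Fin n → ℝ)) (t : ℝ) : Hist h n :=
  ⟨fun θ => x (t + θ.1), x.continuous.comp (continuous_const.add continuous_subtype_val)⟩

/-- `LipBdd R φ` means `lip φ ≤ R`, i.e. φ is R-Lipschitz. -/
def LipBdd {h : ℝ} {n : ℕ} (R : ℝ) (φ : Hist h n) : Prop :=
  ∀ s t : Set.Icc (-h) (0:ℝ), ‖φ s - φ t‖ ≤ R * |s.1 - t.1|

/-- `lip φ < ∞`. -/
def LipFin {h : ℝ} {n : ℕ} (φ : Hist h n) : Prop := ∃ R : ℝ, LipBdd R φ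

/-- V(φ₀; δ, R) = { φ : ‖φ-φ₀‖ ≤ δ, lip φ ≤ R }. -/
def Vset {h : ℝ} {n : ℕ} (φ₀ : Hist h n) (δ R : ℝ) : Set (Hist h n) :=
  {φ | ‖φ - φ₀‖ ≤ δ ∧ LipBdd R φ}

/-- A functional f : 𝒟 ⊆ 𝒞 → E is almost locally Lipschitz. -/
def AlmostLocLip {h : ℝ} {n : ℕ} (𝒟 : Set (Hist h n)) {E : Type*} [NormedAddCommGroup E]
    (f : Hist h n → E) : Prop :=
  ContinuousOn f 𝒟 ∧ ∀ φ₀ ∈ 𝒟, ∀ R : ℝ, 0 < R → ∃ δ : ℝ, 0 < δ ∧ ∃ k : ℝ, 0 ≤ k ∧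
    ∀ φ ∈ Vset φ₀ δ R ∩ 𝒟, ∀ ψ ∈ Vset φ₀ δ R ∩ 𝒟, ‖f φ - f ψ‖ ≤ k * ‖φ - ψ‖

/-- Solution of x'(t) = f(x_t) (t₀ ≤ t ≤ t₀+α), x_{t₀} = φ, on the closed interval
[t₀-h, t₀+α], for a functional with domain 𝒟. -/
def IsSolIcc {h : ℝ} {n : ℕ} (𝒟 : Set (Hist h n)) (f : Hist h n → Fin n → ℝ)
    (t₀ α : ℝ) (φ : Hist h n) (x : C(ℝ, Fin n → ℝ)) : Prop :=
  seg x t₀ = φ ∧ ∀ t ∈ Set.Icc t₀ (t₀ + α),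
    seg (h := h) x t ∈ 𝒟 ∧ HasDerivAt (fun s => x s) (f (seg x t)) t

/-- Solution on the half-open interval [t₀-h, t₀+c), where c ∈ (0,∞]. -/
def IsSolIco {h : ℝ} {n : ℕ} (𝒟 : Set (Hist h n)) (f : Hist h n → Fin n → ℝ)
    (t₀ : ℝ) (c : ℝ≥0∞) (φ : Hist h n) (x : C(ℝ, Fin n → ℝ)) : Prop :=
  seg x t₀ = φ ∧ ∀ t : ℝ, t₀ ≤ t → ENNReal.ofReal (t - t₀) < c →
    seg (h := h) x t ∈ 𝒟 ∧ HasDerivAt (fun s => x s) (f (seg x t)) t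

/-- A non-continuable solution on [t₀-h, t₀+c): it admits no extension to a solution
on a strictly larger interval. -/
def Noncontinuable {h : ℝ} {n : ℕ} (𝒟 : Set (Hist h n)) (f : Hist h n → Fin n → ℝ)
    (t₀ : ℝ) (c : ℝ≥0∞) (φ : Hist h n) (x : C(ℝ, Fin n → ℝ)) : Prop :=
  IsSolIco 𝒟 f t₀ c φ x ∧
    ¬ ∃ c' : ℝ≥0∞, c < c' ∧ ∃ x' : C(ℝ, Fin n → ℝ), IsSolIco 𝒟 f t₀ c' φ x' ∧
      ∀ t : ℝ, t₀ - h ≤ t → ENNReal.ofReal (t - t₀) < c → x' t = x t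



section aux

variable {h : ℝ} {n : ℕ}

lemma seg_apply (x : C(ℝ, Fin n → ℝ)) (t : ℝ) (θ : Set.Icc (-h) (0:ℝ)) :
    seg (h := h) x t θ = x (t + θ.1) := rfl

lemma continuous_seg (x : C(ℝ, Fin n → ℝ)) :
    Continuous (fun t => seg (h := h) x t) := by
  have : (fun t => seg (h := h) x t) =
      ⇑(ContinuousMap.curry ⟨fun p : ℝ × Set.Icc (-h) (0:ℝ) => x (p.1 + p.2.1),
        x.continuous.comp (continuous_fst.add (continuous_subtype_val.comp continuous_snd))⟩) := by
    funext t
    exact ContinuousMap.ext fun θ => rfl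
  rw [this]
  exact ContinuousMap.continuous _

lemma lip_of_sol (hh : 0 < h) {t₀ α R₀ C : ℝ}
    (x : C(ℝ, Fin n → ℝ)) (φ : Hist h n) (g : ℝ → Fin n → ℝ)
    (hseg : seg (h := h) x t₀ = φ) (hφ : LipBdd R₀ φ)
    (hder : ∀ t ∈ Set.Icc t₀ (t₀ + α), HasDerivAt (fun s => x s) (g t) t)
    (hbd : ∀ t ∈ Set.Icc t₀ (t₀ + α), ‖g t‖ ≤ C) :
    ∀ s ∈ Set.Icc (t₀ - h) (t₀ + α), ∀ u ∈ Set.Icc (t₀ - h) (t₀ + α),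
      ‖x s - x u‖ ≤ max R₀ C * |s - u| := by
  have key1 : ∀ s ∈ Set.Icc (t₀ - h) t₀, ∀ u ∈ Set.Icc (t₀ - h) t₀,
      ‖x s - x u‖ ≤ R₀ * |s - u| := by
    intro s hs u hu
    have hmem : ∀ v : ℝ, v ∈ Set.Icc (t₀ - h) t₀ → v - t₀ ∈ Set.Icc (-h) (0:ℝ) := by
      intro v hv; exact ⟨by linarith [hv.1], by linarith [hv.2]⟩
    have h1 : x s = φ ⟨s - t₀, hmem s hs⟩ := by
      rw [← DFunLike.congr_fun hseg ⟨s - t₀, hmem s hs⟩, seg_apply]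
      exact congrArg (⇑x) (by ring)
    have h2 : x u = φ ⟨u - t₀, hmem u hu⟩ := by
      rw [← DFunLike.congr_fun hseg ⟨u - t₀, hmem u hu⟩, seg_apply]
      exact congrArg (⇑x) (by ring)
    rw [h1, h2]
    have := hφ ⟨s - t₀, hmem s hs⟩ ⟨u - t₀, hmem u hu⟩
    have habs : |s - t₀ - (u - t₀)| = |s - u| := congrArg abs (by ring)
    rw [habs] at this
    exact this
  have key2 : ∀ s ∈ Set.Icc t₀ (t₀ + α), ∀ u ∈ Set.Icc t₀ (t₀ + α),
      ‖x s - x u‖ ≤ C * |s - u| := by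
    intro s hs u hu
    have := (convex_Icc t₀ (t₀ + α)).norm_image_sub_le_of_norm_hasDerivWithin_le
      (fun t ht => (hder t ht).hasDerivWithinAt) hbd hu hs
    simpa [Real.norm_eq_abs] using this
  suffices H : ∀ s ∈ Set.Icc (t₀ - h) (t₀ + α), ∀ u ∈ Set.Icc (t₀ - h) (t₀ + α), s ≤ u →
      ‖x s - x u‖ ≤ max R₀ C * |s - u| by
    intro s hs u hu
    rcases le_total s u with hle | hle
    · exact H s hs u hu hle
    · rw [norm_sub_rev, abs_sub_comm]; exact H u hu s hs hle
  intro s hs u hu hsu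
  have hLR : R₀ ≤ max R₀ C := le_max_left _ _
  have hLC : C ≤ max R₀ C := le_max_right _ _
  rcases le_total u t₀ with h1 | h1
  · exact le_trans (key1 s ⟨hs.1, le_trans hsu h1⟩ u ⟨hu.1, h1⟩)
      (mul_le_mul_of_nonneg_right hLR (abs_nonneg _))
  rcases le_total t₀ s with h2 | h2
  · exact le_trans (key2 s ⟨h2, hs.2⟩ u ⟨h1, hu.2⟩)
      (mul_le_mul_of_nonneg_right hLC (abs_nonneg _))
  · have e1 := key1 s ⟨hs.1, h2⟩ t₀ ⟨by linarith, le_refl t₀⟩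
    have e2 := key2 t₀ ⟨le_refl _, le_trans h1 hu.2⟩ u ⟨h1, hu.2⟩
    have a1 : |s - t₀| = t₀ - s := by rw [abs_sub_comm, abs_of_nonneg (by linarith)]
    have a2 : |t₀ - u| = u - t₀ := by rw [abs_sub_comm, abs_of_nonneg (by linarith)]
    have a3 : |s - u| = u - s := by rw [abs_sub_comm, abs_of_nonneg (by linarith)]
    rw [a1] at e1; rw [a2] at e2; rw [a3]
    have tri : ‖x s - x u‖ ≤ ‖x s - x t₀‖ + ‖x t₀ - x u‖ := by
      have : x s - x u = (x s - x t₀) + (x t₀ - x u) := by abel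
      rw [this]; exact norm_add_le _ _
    nlinarith [hLR, hLC]

end aux

/-- Theorem 2.4. Uniqueness of solutions for an almost locally Lipschitz
functional F : 𝒞 → ℝⁿ and a Lipschitz initial history φ. -/
theorem statement1 (h : ℝ) (hh : 0 < h) (n : ℕ) (hn : 1 ≤ n)
    (F : Hist h n → Fin n → ℝ) (hF : AlmostLocLip Set.univ F)
    (φ : Hist h n) (hφ : LipFin φ) (t₀ α : ℝ) (hα : 0 < α)
    (y z : C(ℝ, Fin n → ℝ))
    (hy : IsSolIcc Set.univ F t₀ α φ y) (hz : IsSolIcc Set.univ F t₀ α φ z) :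
    ∀ t ∈ Set.Icc t₀ (t₀ + α), y t = z t := by
  classical
  -- basic consequences of the hypotheses
  obtain ⟨hysg, hyd⟩ := hy
  obtain ⟨hzsg, hzd⟩ := hz
  have hFc : Continuous F := continuousOn_univ.mp hF.1
  -- a Lipschitz constant for φ, nonnegative
  obtain ⟨R₀', hR₀'⟩ := hφ
  have hR₀lip : LipBdd |R₀'| φ := by
    intro s t
    exact le_trans (hR₀' s t) (mul_le_mul_of_nonneg_right (le_abs_self _) (abs_nonneg _))
  set R₀ : ℝ := |R₀'| with hR₀def
  -- a uniform bound on the right-hand sides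
  obtain ⟨C₁, hC₁⟩ := (isCompact_Icc (a := t₀) (b := t₀ + α)).exists_bound_of_continuousOn
    (Continuous.continuousOn (hFc.comp (continuous_seg (h := h) y)))
  obtain ⟨C₂, hC₂⟩ := (isCompact_Icc (a := t₀) (b := t₀ + α)).exists_bound_of_continuousOn
    (Continuous.continuousOn (hFc.comp (continuous_seg (h := h) z)))
  set C : ℝ := max (max C₁ C₂) 0 with hCdef
  have hC0 : 0 ≤ C := le_max_right _ _
  have hCy : ∀ t ∈ Set.Icc t₀ (t₀ + α), ‖F (seg (h := h) y t)‖ ≤ C := fun t ht =>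
    le_trans (hC₁ t ht) (le_trans (le_max_left _ _) (le_max_left _ _))
  have hCz : ∀ t ∈ Set.Icc t₀ (t₀ + α), ‖F (seg (h := h) z t)‖ ≤ C := fun t ht =>
    le_trans (hC₂ t ht) (le_trans (le_max_right _ _) (le_max_left _ _))
  set L : ℝ := max R₀ C with hLdef
  have hL0 : 0 ≤ L := le_trans (abs_nonneg _) (le_max_left _ _)
  have hyLip := lip_of_sol hh y φ (fun t => F (seg (h := h) y t)) hysg hR₀lip
    (fun t ht => (hyd t ht).2) hCy
  have hzLip := lip_of_sol hh z φ (fun t => F (seg (h := h) z t)) hzsg hR₀lip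
    (fun t ht => (hzd t ht).2) hCz
  set R : ℝ := L + 1 with hRdef
  have hRpos : 0 < R := by linarith
  -- segments of solutions are R-Lipschitz
  have hsegLip : ∀ (x : C(ℝ, Fin n → ℝ)),
      (∀ s ∈ Set.Icc (t₀ - h) (t₀ + α), ∀ u ∈ Set.Icc (t₀ - h) (t₀ + α),
        ‖x s - x u‖ ≤ L * |s - u|) →
      ∀ t ∈ Set.Icc t₀ (t₀ + α), LipBdd R (seg (h := h) x t) := by
    intro x hx t ht θ₁ θ₂
    have m1 : t + θ₁.1 ∈ Set.Icc (t₀ - h) (t₀ + α) :=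
      ⟨by linarith [θ₁.2.1, ht.1], by linarith [θ₁.2.2, ht.2]⟩
    have m2 : t + θ₂.1 ∈ Set.Icc (t₀ - h) (t₀ + α) :=
      ⟨by linarith [θ₂.2.1, ht.1], by linarith [θ₂.2.2, ht.2]⟩
    have := hx (t + θ₁.1) m1 (t + θ₂.1) m2
    have habs : |t + θ₁.1 - (t + θ₂.1)| = |θ₁.1 - θ₂.1| := congrArg abs (by ring)
    rw [habs] at this
    refine le_trans this (mul_le_mul_of_nonneg_right (by linarith) (abs_nonneg _))
  -- the set of agreement
  set A : Set ℝ := {t | t ∈ Set.Icc t₀ (t₀ + α) ∧ ∀ s ∈ Set.Icc t₀ t, y s = z s} with hAdef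
  have hyz0 : y t₀ = z t₀ := by
    have mem0 : (0:ℝ) ∈ Set.Icc (-h) (0:ℝ) := ⟨by linarith, le_refl _⟩
    have e1 := DFunLike.congr_fun hysg ⟨0, mem0⟩
    have e2 := DFunLike.congr_fun hzsg ⟨0, mem0⟩
    rw [seg_apply] at e1 e2
    rw [add_zero] at e1 e2
    rw [e1, e2]
  have hA0 : t₀ ∈ A := by
    refine ⟨⟨le_refl _, by linarith⟩, ?_⟩
    intro s hs
    have : s = t₀ := le_antisymm hs.2 hs.1
    rw [this]; exact hyz0
  have hAbdd : BddAbove A := ⟨t₀ + α, fun a ha => ha.1.2⟩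
  set T : ℝ := sSup A with hTdef
  have hT₁ : t₀ ≤ T := le_csSup hAbdd hA0
  have hT₂ : T ≤ t₀ + α := csSup_le ⟨t₀, hA0⟩ (fun a ha => ha.1.2)
  -- y = z on [t₀, T]
  have hyzT : ∀ s ∈ Set.Icc t₀ T, y s = z s := by
    have hIco : Set.EqOn (⇑y) (⇑z) (Set.Ico t₀ T) := by
      intro s hs
      obtain ⟨a, haA, hsa⟩ := exists_lt_of_lt_csSup ⟨t₀, hA0⟩ hs.2
      exact haA.2 s ⟨hs.1, le_of_lt hsa⟩
    rcases eq_or_lt_of_le hT₁ with heq | hlt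
    · intro s hs
      rw [← heq] at hs
      have : s = t₀ := le_antisymm hs.2 hs.1
      rw [this]; exact hyz0
    · have := hIco.closure y.continuous z.continuous
      rw [closure_Ico (ne_of_lt hlt)] at this
      exact fun s hs => this hs
  -- y = z on [t₀ - h, T]
  have hseg_pt : ∀ (x : C(ℝ, Fin n → ℝ)), seg (h := h) x t₀ = φ →
      ∀ s : ℝ, ∀ h1 : t₀ - h ≤ s, ∀ h2 : s ≤ t₀,
        x s = φ ⟨s - t₀, ⟨by linarith, by linarith⟩⟩ := by
    intro x hx s h1 h2
    rw [← DFunLike.congr_fun hx ⟨s - t₀, ⟨by linarith, by linarith⟩⟩, seg_apply]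
    exact congrArg (⇑x) (by ring)
  have hyzfull : ∀ s ∈ Set.Icc (t₀ - h) T, y s = z s := by
    intro s hs
    rcases le_total s t₀ with h1 | h1
    · rw [hseg_pt y hysg s hs.1 h1, hseg_pt z hzsg s hs.1 h1]
    · exact hyzT s ⟨h1, hs.2⟩
  -- main claim: T = t₀ + α
  have hTeq : T = t₀ + α := by
    by_contra hne
    have hlt : T < t₀ + α := lt_of_le_of_ne hT₂ hne
    set ψ : Hist h n := seg (h := h) y T with hψdef
    have hψz : seg (h := h) z T = ψ := by
      refine ContinuousMap.ext fun θ => ?_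
      rw [hψdef, seg_apply, seg_apply]
      exact (hyzfull (T + θ.1) ⟨by linarith [θ.2.1], by linarith [θ.2.2]⟩).symm
    obtain ⟨δ, hδ, k, hk, hloc⟩ := hF.2 ψ (Set.mem_univ _) R hRpos
    obtain ⟨ε₁, hε₁, hball₁⟩ := Metric.continuousAt_iff.mp
      ((continuous_seg (h := h) y).continuousAt (x := T)) δ hδ
    obtain ⟨ε₂, hε₂, hball₂⟩ := Metric.continuousAt_iff.mp
      ((continuous_seg (h := h) z).continuousAt (x := T)) δ hδ
    set ε : ℝ := min (min (ε₁ / 2) (ε₂ / 2)) (min (1 / (2 * (k + 1))) (t₀ + α - T))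
      with hεdef
    have hεpos : 0 < ε := by
      refine lt_min (lt_min (by linarith) (by linarith)) (lt_min ?_ (by linarith))
      positivity
    have hεle₁ : ε ≤ ε₁ / 2 := le_trans (min_le_left _ _) (min_le_left _ _)
    have hεle₂ : ε ≤ ε₂ / 2 := le_trans (min_le_left _ _) (min_le_right _ _)
    have hεlek : ε ≤ 1 / (2 * (k + 1)) := le_trans (min_le_right _ _) (min_le_left _ _)
    have hεleα : ε ≤ t₀ + α - T := le_trans (min_le_right _ _) (min_le_right _ _)
    -- membership of the interval in the domain of the ODE
    have hsub : Set.Icc T (T + ε) ⊆ Set.Icc t₀ (t₀ + α) := by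
      intro t ht; exact ⟨le_trans hT₁ ht.1, by linarith [ht.2]⟩
    -- segments stay in Vset ψ δ R
    have hsegVy : ∀ t ∈ Set.Icc T (T + ε), seg (h := h) y t ∈ Vset ψ δ R := by
      intro t ht
      constructor
      · rw [← dist_eq_norm]
        refine le_of_lt (hball₁ ?_)
        rw [Real.dist_eq, abs_sub_comm, abs_of_nonpos (by linarith [ht.1])]
        have := ht.2; linarith
      · exact hsegLip y hyLip t (hsub ht)
    have hsegVz : ∀ t ∈ Set.Icc T (T + ε), seg (h := h) z t ∈ Vset ψ δ R := by
      intro t ht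
      constructor
      · rw [← dist_eq_norm, ← hψz]
        refine le_of_lt (hball₂ ?_)
        rw [Real.dist_eq, abs_sub_comm, abs_of_nonpos (by linarith [ht.1])]
        have := ht.2; linarith
      · exact hsegLip z hzLip t (hsub ht)
    -- maximum of ‖y - z‖ on [T, T + ε]
    obtain ⟨tm, htm, hmax⟩ := isCompact_Icc.exists_isMaxOn (s := Set.Icc T (T + ε))
      ⟨T, ⟨le_refl _, by linarith⟩⟩
      (Continuous.continuousOn ((y.continuous.sub z.continuous).norm))
    set M : ℝ := ‖y tm - z tm‖ with hMdef
    have hM0 : 0 ≤ M := norm_nonneg _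
    have hmax' : ∀ s ∈ Set.Icc T (T + ε), ‖y s - z s‖ ≤ M := fun s hs => hmax hs
    have hsegM : ∀ t ∈ Set.Icc T (T + ε), ‖seg (h := h) y t - seg (h := h) z t‖ ≤ M := by
      intro t ht
      refine (ContinuousMap.norm_le _ hM0).mpr fun θ => ?_
      have happ : (seg (h := h) y t - seg (h := h) z t) θ = y (t + θ.1) - z (t + θ.1) := rfl
      rw [happ]
      rcases le_total (t + θ.1) T with h1 | h1
      · rw [hyzfull (t + θ.1) ⟨by linarith [θ.2.1, ht.1], h1⟩]
        simpa using hM0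
      · exact hmax' (t + θ.1) ⟨h1, by linarith [θ.2.2, ht.2]⟩
    -- FTC estimate
    have hTtm : T ≤ tm := htm.1
    have hder : ∀ s ∈ Set.uIcc T tm,
        HasDerivAt (fun u => y u - z u)
          (F (seg (h := h) y s) - F (seg (h := h) z s)) s := by
      intro s hs
      rw [Set.uIcc_of_le hTtm] at hs
      have hmem : s ∈ Set.Icc t₀ (t₀ + α) := hsub ⟨hs.1, le_trans hs.2 htm.2⟩
      exact ((hyd s hmem).2).sub ((hzd s hmem).2)
    have hint : IntervalIntegrable
        (fun s => F (seg (h := h) y s) - F (seg (h := h) z s))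
        MeasureTheory.volume T tm :=
      (((hFc.comp (continuous_seg (h := h) y)).sub
        (hFc.comp (continuous_seg (h := h) z)))).intervalIntegrable _ _
    have heq := intervalIntegral.integral_eq_sub_of_hasDerivAt hder hint
    have hT0 : y T - z T = 0 := by rw [hyzT T ⟨hT₁, le_refl T⟩, sub_self]
    have hbound : ‖∫ s in T..tm, (F (seg (h := h) y s) - F (seg (h := h) z s))‖
        ≤ (k * M) * |tm - T| := by
      refine intervalIntegral.norm_integral_le_of_norm_le_const fun s hs => ?_
      rw [Set.uIoc_of_le hTtm] at hs
      have hsI : s ∈ Set.Icc T (T + ε) := ⟨le_of_lt hs.1, le_trans hs.2 htm.2⟩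
      calc ‖F (seg (h := h) y s) - F (seg (h := h) z s)‖
          ≤ k * ‖seg (h := h) y s - seg (h := h) z s‖ :=
            hloc _ ⟨hsegVy s hsI, Set.mem_univ _⟩ _ ⟨hsegVz s hsI, Set.mem_univ _⟩
        _ ≤ k * M := mul_le_mul_of_nonneg_left (hsegM s hsI) hk
    rw [heq, hT0, sub_zero] at hbound
    -- conclude M = 0
    have habs : |tm - T| ≤ ε := by
      rw [abs_of_nonneg (by linarith)]; linarith [htm.2]
    have hM0' : M = 0 := by
      have s1 : k * M * |tm - T| ≤ k * M * ε :=
        mul_le_mul_of_nonneg_left habs (mul_nonneg hk hM0)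
      have s2 : k * M * ε ≤ k * M * (1 / (2 * (k + 1))) :=
        mul_le_mul_of_nonneg_left hεlek (mul_nonneg hk hM0)
      have hk1 : (0:ℝ) < 2 * (k + 1) := by linarith
      have s3 : k * M * (1 / (2 * (k + 1))) ≤ M / 2 := by
        rw [mul_one_div, div_le_div_iff₀ hk1 two_pos]
        nlinarith
      have : M ≤ M / 2 := by
        calc M = ‖y tm - z tm‖ := rfl
          _ ≤ k * M * |tm - T| := hbound
          _ ≤ M / 2 := le_trans s1 (le_trans s2 s3)
      linarith
    have hagree : ∀ s ∈ Set.Icc T (T + ε), y s = z s := by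
      intro s hs
      have := le_trans (hmax' s hs) (le_of_eq hM0')
      exact sub_eq_zero.mp (norm_le_zero_iff.mp this)
    -- contradiction with sSup
    have hmem : T + ε ∈ A := by
      refine ⟨⟨by linarith, by linarith⟩, ?_⟩
      intro s hs
      rcases le_total s T with h1 | h1
      · exact hyzT s ⟨hs.1, h1⟩
      · exact hagree s ⟨h1, hs.2⟩
    have : T + ε ≤ T := le_csSup hAbdd hmem
    linarith
  intro t ht
  exact hyzT t (by rw [hTeq]; exact ht)
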